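/- Let h : Σ → Σ* be a morphism and h̄ : (Σ × A) → (Σ × A)* an annotation of h. Then the dominant eigenvalue (Perron–Frobenius eigenvalue) of the incidence matrix of h equals the dominant eigenvalue of the incidence matrix of h̄. -/

import Mathlib

/-- The incidence matrix (over ℝ) of a morphism `h`. -/
def incMatR {S : Type*} [DecidableEq S] (h : S → List S) : Matrix S S ℝ :=
  Matrix.of fun i j => ((h j).count i : ℝ)

/-- `α` is the dominant (Perron–Frobenius) eigenvalue of the non-negative matrix `M`:
it is a real eigenvalue with a non-negative eigenvector, and it dominates the absolute
value of every complex eigenvalue of `M`. -/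
def IsDomEig {n : Type*} [Fintype n] [DecidableEq n] (M : Matrix n n ℝ) (α : ℝ) : Prop :=
  (∃ v : n → ℝ, v ≠ 0 ∧ (∀ i, 0 ≤ v i) ∧ M.mulVec v = α • v) ∧
    ∀ μ : ℂ, (∃ u : n → ℂ, u ≠ 0 ∧ (M.map (Complex.ofReal ·)).mulVec u = μ • u) →
      ‖μ‖ ≤ α

open Matrix

lemma sum_count_proj {S A : Type*} [Fintype A] [DecidableEq S] [DecidableEq A]
    (l : List (S × A)) (b : S) :
    ∑ a : A, @List.count (S × A) instBEqOfDecidableEq (b, a) l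
      = (l.map Prod.fst).count b := by
  induction l with
  | nil => simp
  | cons p t ih =>
    obtain ⟨c, a'⟩ := p
    have key : ∑ a : A, (if (c, a') = (b, a) then 1 else 0) = if c = b then 1 else 0 := by
      by_cases hbc : c = b
      · subst hbc
        simp [Prod.ext_iff, Finset.sum_ite_eq]
      · simp [Prod.ext_iff, hbc]
    simp only [List.count_cons, Finset.sum_add_distrib, ih, List.map_cons, beq_iff_eq]
    congr 1

lemma eig_transpose {n : Type*} [Fintype n] [DecidableEq n] (M : Matrix n n ℂ) (μ : ℂ)
    (hM : ∃ u : n → ℂ, u ≠ 0 ∧ Mᵀ.mulVec u = μ • u) :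
    ∃ u : n → ℂ, u ≠ 0 ∧ M.mulVec u = μ • u := by
  obtain ⟨u, hu0, hu⟩ := hM
  have h1 : (Mᵀ - μ • 1).mulVec u = 0 := by
    rw [Matrix.sub_mulVec, hu, Matrix.smul_mulVec, Matrix.one_mulVec, sub_self]
  have hdet : (Mᵀ - μ • 1).det = 0 :=
    Matrix.exists_mulVec_eq_zero_iff.mp ⟨u, hu0, h1⟩
  have hdet2 : (M - μ • 1).det = 0 := by
    rw [← Matrix.det_transpose]
    convert hdet using 2
    simp [Matrix.transpose_sub, Matrix.transpose_smul]
  obtain ⟨v, hv0, hv⟩ := Matrix.exists_mulVec_eq_zero_iff.mpr hdet2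
  refine ⟨v, hv0, ?_⟩
  rw [Matrix.sub_mulVec, Matrix.smul_mulVec, Matrix.one_mulVec, sub_eq_zero] at hv
  exact hv

lemma mulVec_ofReal {n : Type*} [Fintype n] (M : Matrix n n ℝ) (v : n → ℝ) :
    (M.map (Complex.ofReal ·)).mulVec (fun j => (v j : ℂ)) =
      fun i => ((M.mulVec v i : ℝ) : ℂ) := by
  funext i
  simp [Matrix.mulVec, dotProduct]

lemma eig_nonneg {n : Type*} [Fintype n] [DecidableEq n] {M : Matrix n n ℝ} {α : ℝ}
    (hMnn : ∀ i j, 0 ≤ M i j) (v : n → ℝ) (hv0 : v ≠ 0) (hvnn : ∀ i, 0 ≤ v i)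
    (hv : M.mulVec v = α • v) : 0 ≤ α := by
  obtain ⟨i, hi⟩ := Function.ne_iff.mp hv0
  simp only [Pi.zero_apply] at hi
  have hvi : 0 < v i := lt_of_le_of_ne (hvnn i) (Ne.symm hi)
  have h2 : 0 ≤ v i * α := by
    rw [mul_comm]
    have := congrFun hv i
    simp only [Pi.smul_apply, smul_eq_mul] at this
    rw [← this]
    exact Finset.sum_nonneg fun j _ => mul_nonneg (hMnn i j) (hvnn j)
  exact nonneg_of_mul_nonneg_right h2 hvi

/-- The dominant eigenvalue of the incidence matrix of a morphism `h` equals the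
dominant eigenvalue of the incidence matrix of any annotation `hb` of `h`. -/
theorem stmt3 {S A : Type*} [Fintype S] [Fintype A] [Nonempty A]
    [DecidableEq S] [DecidableEq A]
    (h : S → List S) (hb : S × A → List (S × A))
    (hann : ∀ (b : S) (a : A), (hb (b, a)).map Prod.fst = h b)
    (α β : ℝ)
    (hα : IsDomEig (incMatR h) α)
    (hβ : IsDomEig (incMatR hb) β) :
    α = β := by
  have hMnn : ∀ i j, 0 ≤ incMatR h i j := fun i j => Nat.cast_nonneg _
  have hNnn : ∀ i j, 0 ≤ incMatR hb i j := fun i j => Nat.cast_nonneg _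
  obtain ⟨⟨v, hv0, hvnn, hv⟩, hαdom⟩ := hα
  obtain ⟨⟨u, hu0, hunn, hu⟩, hβdom⟩ := hβ
  have hα0 : 0 ≤ α := eig_nonneg hMnn v hv0 hvnn hv
  have hβ0 : 0 ≤ β := eig_nonneg hNnn u hu0 hunn hu
  have hkey : ∀ (b c : S) (a' : A),
      ∑ a : A, incMatR hb (b, a) (c, a') = incMatR h b c := by
    intro b c a'
    have hnat := sum_count_proj (hb (c, a')) b
    rw [hann] at hnat
    simp only [incMatR, Matrix.of_apply, ← Nat.cast_sum]
    exact_mod_cast hnat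
  ---- β ≤ α
  have hβα : β ≤ α := by
    set w : S → ℝ := fun b => ∑ a : A, u (b, a) with hwdef
    have hw0 : w ≠ 0 := by
      obtain ⟨p, hp⟩ := Function.ne_iff.mp hu0
      simp only [Pi.zero_apply] at hp
      intro h0
      have hle : u p ≤ w p.1 :=
        Finset.single_le_sum (f := fun a => u (p.1, a))
          (fun a _ => hunn _) (Finset.mem_univ p.2)
      rw [h0] at hle
      simp only [Pi.zero_apply] at hle
      exact hp (le_antisymm hle (hunn p))
    have hweig : (incMatR h).mulVec w = β • w := by
      funext b
      have step : (incMatR h).mulVec w b = ∑ a : A, (incMatR hb).mulVec u (b, a) := by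
        calc (incMatR h).mulVec w b
            = ∑ c, incMatR h b c * ∑ a' : A, u (c, a') := by
              simp [Matrix.mulVec, dotProduct, hwdef]
          _ = ∑ c, ∑ a' : A, (∑ a : A, incMatR hb (b, a) (c, a')) * u (c, a') := by
              refine Finset.sum_congr rfl fun c _ => ?_
              rw [Finset.mul_sum]
              exact Finset.sum_congr rfl fun a' _ => by rw [hkey]
          _ = ∑ c, ∑ a' : A, ∑ a : A, incMatR hb (b, a) (c, a') * u (c, a') := by
              simp [Finset.sum_mul]
          _ = ∑ c, ∑ a : A, ∑ a' : A, incMatR hb (b, a) (c, a') * u (c, a') :=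
              Finset.sum_congr rfl fun c _ => Finset.sum_comm
          _ = ∑ a : A, ∑ c, ∑ a' : A, incMatR hb (b, a) (c, a') * u (c, a') :=
              Finset.sum_comm
          _ = ∑ a : A, (incMatR hb).mulVec u (b, a) := by
              simp [Matrix.mulVec, dotProduct, Fintype.sum_prod_type]
      rw [step, hu]
      simp [hwdef, Finset.mul_sum]
    have hcmplx : ∃ z : S → ℂ, z ≠ 0 ∧
        ((incMatR h).map (Complex.ofReal ·)).mulVec z = (β : ℂ) • z := by
      refine ⟨fun b => (w b : ℂ), ?_, ?_⟩
      · intro h0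
        apply hw0
        funext b
        have := congrFun h0 b
        simpa using this
      · rw [mulVec_ofReal, hweig]
        funext b
        simp
    have := hαdom (β : ℂ) hcmplx
    rwa [Complex.norm_real, Real.norm_eq_abs, abs_of_nonneg hβ0] at this
  ---- α ≤ β
  have hαβ : α ≤ β := by
    set Mc := (incMatR h).map (Complex.ofReal ·) with hMc
    set Nc := (incMatR hb).map (Complex.ofReal ·) with hNc
    have h1 : ∃ z : S → ℂ, z ≠ 0 ∧ Mc.mulVec z = (α : ℂ) • z := by
      refine ⟨fun b => (v b : ℂ), ?_, ?_⟩
      · intro h0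
        apply hv0
        funext b
        have := congrFun h0 b
        simpa using this
      · rw [hMc, mulVec_ofReal, hv]
        funext b
        simp
    have h2 : ∃ z : S → ℂ, z ≠ 0 ∧ Mcᵀ.mulVec z = (α : ℂ) • z := by
      refine eig_transpose Mcᵀ (α : ℂ) ?_
      rw [Matrix.transpose_transpose]
      exact h1
    obtain ⟨z, hz0, hz⟩ := h2
    have h3 : ∃ y : S × A → ℂ, y ≠ 0 ∧ Ncᵀ.mulVec y = (α : ℂ) • y := by
      refine ⟨fun p => z p.1, ?_, ?_⟩
      · obtain ⟨b, hbz⟩ := Function.ne_iff.mp hz0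
        simp only [Pi.zero_apply] at hbz
        intro h0
        exact hbz (by simpa using congrFun h0 (b, Classical.arbitrary A))
      · funext p
        obtain ⟨c, a'⟩ := p
        have hzc := congrFun hz c
        simp only [Matrix.mulVec, dotProduct, Matrix.transpose_apply,
          Pi.smul_apply, smul_eq_mul] at hzc ⊢
        rw [Fintype.sum_prod_type]
        calc ∑ b : S, ∑ a : A, Nc (b, a) (c, a') * z b
            = ∑ b : S, (∑ a : A, Nc (b, a) (c, a')) * z b := by
              simp [Finset.sum_mul]
          _ = ∑ b : S, Mc b c * z b := by
              refine Finset.sum_congr rfl fun b _ => ?_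
              congr 1
              rw [hNc, hMc]
              simp only [Matrix.map_apply, ← Complex.ofReal_sum]
              exact_mod_cast congrArg (fun x : ℝ => (x : ℂ)) (hkey b c a')
          _ = (α : ℂ) * z c := hzc
    have h4 := eig_transpose Nc (α : ℂ) h3
    have := hβdom (α : ℂ) h4
    rwa [Complex.norm_real, Real.norm_eq_abs, abs_of_nonneg hα0] at this
  linarith
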